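/- There exists an absolute constant C > 0 such that for every integer n ≥ 2 there exists a Littlewood polynomial P of degree n (that is, a choice of signs ε₀, …, ε_n ∈ {-1, 1} with P(z) = Σ_{k=0}^n ε_k z^k) satisfying |P(z)| ≤ C √n for every complex number z with |z| = 1. -/

import Mathlib

/-- The Rudin–Shapiro sign sequence. -/
noncomputable def rs : ℕ → ℝ
  | 0 => 1
  | n + 1 =>
      if (n + 1) % 2 = 0 then rs ((n + 1) / 2)
      else (-1 : ℝ) ^ ((n + 1) / 2) * rs ((n + 1) / 2)
  decreasing_by all_goals exact Nat.div_lt_self (Nat.succ_pos n) one_lt_two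

lemma rs_zero : rs 0 = 1 := by rw [rs]

lemma rs_succ (n : ℕ) : rs (n + 1) =
    if (n + 1) % 2 = 0 then rs ((n + 1) / 2)
    else (-1 : ℝ) ^ ((n + 1) / 2) * rs ((n + 1) / 2) := by rw [rs]

lemma rs_two_mul (k : ℕ) : rs (2 * k) = rs k := by
  cases k with
  | zero => rfl
  | succ k =>
      have h : 2 * (k + 1) = (2 * k + 1) + 1 := by ring
      rw [h, rs_succ]
      have h2 : (2 * k + 1 + 1) % 2 = 0 := by omega
      have h3 : (2 * k + 1 + 1) / 2 = k + 1 := by omega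
      rw [if_pos h2, h3]

lemma rs_two_mul_add_one (k : ℕ) : rs (2 * k + 1) = (-1 : ℝ) ^ k * rs k := by
  rw [show 2 * k + 1 = (2 * k) + 1 from rfl, rs_succ]
  have h2 : ¬ ((2 * k + 1) % 2 = 0) := by omega
  have h3 : (2 * k + 1) / 2 = k := by omega
  rw [if_neg h2, h3]

lemma rs_pm : ∀ n, rs n = 1 ∨ rs n = -1 := by
  intro n
  induction n using Nat.strong_induction_on with
  | _ n ih =>
    match n with
    | 0 => exact Or.inl rs_zero
    | n + 1 =>
      rcases Nat.even_or_odd (n + 1) with ⟨k, hk⟩ | ⟨k, hk⟩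
      · have hk' : n + 1 = 2 * k := by omega
        have hkn : k < n + 1 := by omega
        rw [hk', rs_two_mul]
        exact ih k hkn
      · have hkn : k < n + 1 := by omega
        rw [hk, rs_two_mul_add_one]
        rcases ih k hkn with h | h <;> rcases Nat.even_or_odd k with he | he <;>
          first | simp [h, Even.neg_one_pow he] | simp [h, Odd.neg_one_pow he]


/-- Partial sums of the Rudin–Shapiro polynomial. -/
noncomputable def SP (N : ℕ) (z : ℂ) : ℂ := ∑ k ∈ Finset.range N, (rs k : ℂ) * z ^ k

lemma SP_neg (N : ℕ) (z : ℂ) : SP N (-z) = ∑ k ∈ Finset.range N, (-1 : ℂ) ^ k * (rs k : ℂ) * z ^ k := by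
  unfold SP
  refine Finset.sum_congr rfl fun k _ => ?_
  rw [neg_pow]; ring

lemma SP_doubling (N : ℕ) (z : ℂ) :
    SP (2 * N) z = SP N (z ^ 2) + z * SP N (-(z ^ 2)) := by
  induction N with
  | zero => simp [SP]
  | succ N ih =>
      have h : 2 * (N + 1) = (2 * N) + 1 + 1 := by ring
      rw [h]
      unfold SP at *
      rw [Finset.sum_range_succ, Finset.sum_range_succ, Finset.sum_range_succ,
        Finset.sum_range_succ, ih, rs_two_mul, rs_two_mul_add_one]
      push_cast
      rw [neg_pow (z ^ 2) N]
      ring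

lemma parallelogram (u v : ℂ) :
    ‖u + v‖ ^ 2 + ‖u - v‖ ^ 2
      = 2 * (‖u‖ ^ 2 + ‖v‖ ^ 2) := by
  simp only [Complex.sq_norm, Complex.normSq_apply, Complex.add_re, Complex.add_im,
    Complex.sub_re, Complex.sub_im]
  ring

lemma SP_pow_identity : ∀ m : ℕ, ∀ z : ℂ, ‖z‖ = 1 →
    ‖SP (2 ^ m) z‖ ^ 2 + ‖SP (2 ^ m) (-z)‖ ^ 2 = 2 ^ (m + 1) := by
  intro m
  induction m with
  | zero =>
      intro z hz
      simp [SP, rs_zero]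
      norm_num
  | succ m ih =>
      intro z hz
      have hz2 : ‖z ^ 2‖ = 1 := by rw [norm_pow, hz, one_pow]
      have h2m : 2 ^ (m + 1) = 2 * 2 ^ m := by ring
      have hneg : (-z) ^ 2 = z ^ 2 := by ring
      rw [h2m, SP_doubling, SP_doubling, hneg]
      have habs : ‖z * SP (2 ^ m) (-(z ^ 2))‖ = ‖SP (2 ^ m) (-(z ^ 2))‖ := by
        rw [norm_mul, hz, one_mul]
      calc ‖SP (2 ^ m) (z ^ 2) + z * SP (2 ^ m) (-(z ^ 2))‖ ^ 2
            + ‖SP (2 ^ m) (z ^ 2) + -z * SP (2 ^ m) (-(z ^ 2))‖ ^ 2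
          = ‖SP (2 ^ m) (z ^ 2) + z * SP (2 ^ m) (-(z ^ 2))‖ ^ 2
            + ‖SP (2 ^ m) (z ^ 2) - z * SP (2 ^ m) (-(z ^ 2))‖ ^ 2 := by
            rw [neg_mul, ← sub_eq_add_neg]
        _ = 2 * (‖SP (2 ^ m) (z ^ 2)‖ ^ 2
              + ‖z * SP (2 ^ m) (-(z ^ 2))‖ ^ 2) := parallelogram _ _
        _ = 2 * (‖SP (2 ^ m) (z ^ 2)‖ ^ 2
              + ‖SP (2 ^ m) (-(z ^ 2))‖ ^ 2) := by rw [habs]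
        _ = 2 ^ (m + 1 + 1) := by rw [ih (z ^ 2) hz2]; ring

lemma SP_pow_le (m : ℕ) (z : ℂ) (hz : ‖z‖ = 1) :
    ‖SP (2 ^ m) z‖ ≤ Real.sqrt 2 * Real.sqrt (2 ^ m) := by
  have h := SP_pow_identity m z hz
  have h1 : ‖SP (2 ^ m) z‖ ^ 2 ≤ 2 * 2 ^ m := by
    rw [show ((2:ℝ) ^ (m + 1)) = 2 * 2 ^ m by ring] at h
    have := sq_nonneg (‖SP (2 ^ m) (-z)‖)
    linarith
  have h2 : (0:ℝ) ≤ 2 * 2 ^ m := by positivity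
  calc ‖SP (2 ^ m) z‖ = Real.sqrt (‖SP (2 ^ m) z‖ ^ 2) :=
        (Real.sqrt_sq (norm_nonneg _)).symm
    _ ≤ Real.sqrt (2 * 2 ^ m) := Real.sqrt_le_sqrt h1
    _ = Real.sqrt 2 * Real.sqrt (2 ^ m) := Real.sqrt_mul (by norm_num) _


lemma rs_one : rs 1 = 1 := by
  rw [show 1 = 2 * 0 + 1 from rfl, rs_two_mul_add_one, rs_zero]; norm_num

lemma rs_two : rs 2 = 1 := by
  rw [show 2 = 2 * 1 from rfl, rs_two_mul, rs_one]

lemma rs_three : rs 3 = -1 := by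
  rw [show 3 = 2 * 1 + 1 from rfl, rs_two_mul_add_one, rs_one]; norm_num

lemma rs_shift : ∀ m : ℕ, 1 ≤ m → ∀ j : ℕ, j < 2 ^ m →
    rs (2 ^ m + j) = if j < 2 ^ (m - 1) then rs j else -rs j := by
  intro m
  induction m with
  | zero => omega
  | succ m ih =>
    intro _ j hj
    rcases Nat.eq_zero_or_pos m with hm0 | hm1
    · subst hm0
      interval_cases j
      · norm_num [rs_two, rs_zero]
      · norm_num [rs_three, rs_one]
    · have hA : 2 ^ m = 2 * 2 ^ (m - 1) := by
        rw [← pow_succ']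
        congr 1
        omega
      have hsimp : m + 1 - 1 = m := rfl
      rw [hsimp]
      rcases Nat.even_or_odd j with ⟨k, hk⟩ | ⟨k, hk⟩
      · have hjk : j = 2 * k := by omega
        subst hjk
        have h1 : 2 ^ (m + 1) + 2 * k = 2 * (2 ^ m + k) := by ring
        rw [h1, rs_two_mul, ih hm1 k (by omega), rs_two_mul]
        split_ifs with h2 h3 h3 <;> first | rfl | (exfalso; omega)
      · subst hk
        have h1 : 2 ^ (m + 1) + (2 * k + 1) = 2 * (2 ^ m + k) + 1 := by ring
        rw [h1, rs_two_mul_add_one, ih hm1 k (by omega)]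
        have hpow : (-1 : ℝ) ^ (2 ^ m + k) = (-1 : ℝ) ^ k := by
          rw [pow_add, Even.neg_one_pow ⟨2 ^ (m - 1), by omega⟩, one_mul]
        rw [hpow, rs_two_mul_add_one]
        split_ifs with h2 h3 h3 <;> first | ring1 | (exfalso; omega)

lemma num_ineq (M r : ℝ) (h0 : 0 ≤ r) (h1 : r ≤ M) :
    (2 + Real.sqrt 2) * Real.sqrt M + 10 * Real.sqrt r ≤ 10 * Real.sqrt (M + r) := by
  have hM : (0:ℝ) ≤ M := le_trans h0 h1
  set a := Real.sqrt M with ha'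
  set b := Real.sqrt r with hb'
  set c := Real.sqrt (M + r) with hc'
  have ha : a ^ 2 = M := Real.sq_sqrt hM
  have hb : b ^ 2 = r := Real.sq_sqrt h0
  have hc : c ^ 2 = M + r := Real.sq_sqrt (by linarith)
  have hba : b ≤ a := Real.sqrt_le_sqrt h1
  have han : 0 ≤ a := Real.sqrt_nonneg _
  have hbn : 0 ≤ b := Real.sqrt_nonneg _
  have hcn : 0 ≤ c := Real.sqrt_nonneg _
  have hs2 : Real.sqrt 2 ^ 2 = 2 := Real.sq_sqrt (by norm_num)
  have hsn : 0 ≤ Real.sqrt 2 := Real.sqrt_nonneg _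
  have hs15 : Real.sqrt 2 ≤ 3 / 2 := by
    nlinarith [hs2, hsn]
  have hL : 0 ≤ (2 + Real.sqrt 2) * a + 10 * b := by positivity
  have key : ((2 + Real.sqrt 2) * a + 10 * b) ^ 2 ≤ (10 * c) ^ 2 := by
    nlinarith [mul_nonneg han hbn, sq_nonneg (a - b), mul_nonneg (mul_nonneg hsn han) hbn,
      mul_nonneg (mul_nonneg hsn han) han]
  calc (2 + Real.sqrt 2) * a + 10 * b
      = Real.sqrt (((2 + Real.sqrt 2) * a + 10 * b) ^ 2) := (Real.sqrt_sq hL).symm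
    _ ≤ Real.sqrt ((10 * c) ^ 2) := Real.sqrt_le_sqrt key
    _ = 10 * c := Real.sqrt_sq (by positivity)


lemma SP_le : ∀ N : ℕ, ∀ z : ℂ, ‖z‖ = 1 →
    ‖SP N z‖ ≤ 10 * Real.sqrt N := by
  intro N
  induction N using Nat.strong_induction_on with
  | _ N ih =>
    intro z hz
    by_cases hN2 : N < 2
    · interval_cases N
      · simp [SP]
      · simp only [SP, Finset.sum_range_one, pow_zero, mul_one, rs_zero]
        norm_num
    · push_neg at hN2
      set m := Nat.log 2 N with hm
      have hMN : 2 ^ m ≤ N := Nat.pow_log_le_self 2 (by omega)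
      have hNM : N < 2 ^ (m + 1) := Nat.lt_pow_succ_log_self (by norm_num) N
      have hm1 : 1 ≤ m := by
        by_contra h
        have : m = 0 := by omega
        rw [this] at hNM
        omega
      have hA : 2 ^ m = 2 * 2 ^ (m - 1) := by
        rw [← pow_succ']; congr 1; omega
      set M := 2 ^ m with hM
      set A := 2 ^ (m - 1) with hAdef
      set r := N - M with hr
      have hMR : ((M : ℕ) : ℝ) = (2:ℝ) ^ m := by rw [hM]; push_cast; ring
      have hAR : ((A : ℕ) : ℝ) = (2:ℝ) ^ (m - 1) := by rw [hAdef]; push_cast; ring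
      have hNr : N = M + r := by omega
      have hrM : r < M := by omega
      have hrN : r < N := by omega
      -- split the sum
      set T : ℂ := ∑ j ∈ Finset.range r, (rs (M + j) : ℂ) * z ^ j with hT
      have hsplit : SP N z = SP M z + z ^ M * T := by
        rw [hNr]
        unfold SP
        rw [Finset.sum_range_add, hT, Finset.mul_sum]
        congr 1
        refine Finset.sum_congr rfl fun j _ => ?_
        rw [pow_add]; ring
      -- bound on T
      have hTbound : ‖T‖ ≤ 2 * (Real.sqrt 2 * Real.sqrt A) + 10 * Real.sqrt r := by
        by_cases hcase : r ≤ A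
        · have hTeq : T = SP r z := by
            rw [hT]
            unfold SP
            refine Finset.sum_congr rfl fun j hj => ?_
            rw [Finset.mem_range] at hj
            rw [rs_shift m hm1 j (by omega), if_pos (by omega)]
          rw [hTeq]
          have := ih r hrN z hz
          have h2 : 0 ≤ 2 * (Real.sqrt 2 * Real.sqrt (A:ℝ)) := by positivity
          linarith
        · push_neg at hcase
          have hTeq : T = 2 * SP A z - SP r z := by
            have key : T + SP r z = 2 * SP A z := by
              rw [hT]
              unfold SP
              rw [← Finset.sum_add_distrib]
              have step1 : ∀ j ∈ Finset.range r,
                  (rs (M + j) : ℂ) * z ^ j + (rs j : ℂ) * z ^ j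
                    = (if j < A then (2 : ℂ) * (rs j : ℂ) else 0) * z ^ j := by
                intro j hj
                rw [Finset.mem_range] at hj
                rw [rs_shift m hm1 j (by omega)]
                split_ifs with h
                · push_cast; ring
                · push_cast; ring
              rw [Finset.sum_congr rfl step1]
              rw [← Finset.sum_subset (Finset.range_subset_range.mpr (le_of_lt hcase))
                (fun x _ hx => by
                  rw [Finset.mem_range] at hx
                  rw [if_neg (by omega), zero_mul])]
              rw [Finset.mul_sum]
              refine Finset.sum_congr rfl fun j hj => ?_
              rw [Finset.mem_range] at hj
              rw [if_pos hj]
              ring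
            have := key
            linear_combination key
          rw [hTeq]
          have h1 : ‖2 * SP A z - SP r z‖
              ≤ 2 * ‖SP A z‖ + ‖SP r z‖ := by
            calc ‖2 * SP A z - SP r z‖
                ≤ ‖2 * SP A z‖ + ‖SP r z‖ := by
                  exact (norm_sub_le _ _)
              _ = 2 * ‖SP A z‖ + ‖SP r z‖ := by
                  rw [norm_mul]
                  norm_num
          have h2 := SP_pow_le (m - 1) z hz
          rw [← hAdef, ← hAR] at h2
          have h3 := ih r hrN z hz
          linarith
      -- assemble
      have habsM : ‖z ^ M‖ = 1 := by rw [norm_pow, hz, one_pow]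
      have hsqA : 2 * (Real.sqrt 2 * Real.sqrt (A:ℝ)) = 2 * Real.sqrt (M:ℝ) := by
        rw [← Real.sqrt_mul (by norm_num : (0:ℝ) ≤ 2) (A:ℝ)]
        have h22 : (2:ℝ) * (A:ℝ) = (M:ℝ) := by
          rw [hAR, hMR, ← pow_succ']
          congr 1
          omega
        rw [h22]
      have hfinal : ‖SP N z‖
          ≤ (2 + Real.sqrt 2) * Real.sqrt (M:ℝ) + 10 * Real.sqrt (r:ℝ) := by
        calc ‖SP N z‖ ≤ ‖SP M z‖ + ‖z ^ M * T‖ := by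
              rw [hsplit]; exact norm_add_le _ _
          _ = ‖SP M z‖ + ‖T‖ := by rw [norm_mul, habsM, one_mul]
          _ ≤ Real.sqrt 2 * Real.sqrt (M:ℝ)
              + (2 * (Real.sqrt 2 * Real.sqrt (A:ℝ)) + 10 * Real.sqrt (r:ℝ)) := by
              have hM2 := SP_pow_le m z hz
              rw [← hM, ← hMR] at hM2
              linarith
          _ = (2 + Real.sqrt 2) * Real.sqrt (M:ℝ) + 10 * Real.sqrt (r:ℝ) := by
              rw [hsqA]; ring
      have hnum := num_ineq (M:ℝ) (r:ℝ) (by positivity) (by exact_mod_cast hrM.le)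
      have hcast : ((M:ℝ) + (r:ℝ)) = (N:ℝ) := by push_cast [hNr]; ring
      rw [hcast] at hnum
      linarith


/-- **Rudin–Shapiro type bound.** There is an absolute constant `C > 0` such that for
every `n ≥ 2` there is a choice of signs `ε₀, …, ε_n ∈ {-1, 1}` such that the Littlewood
polynomial `P(z) = ∑_{k=0}^n ε_k z^k` satisfies `|P(z)| ≤ C √n` for all `z` with `|z| = 1`. -/
theorem one_sided_flat_littlewood :
    ∃ C : ℝ, 0 < C ∧
      ∀ n : ℕ, 2 ≤ n →
        ∃ ε : ℕ → ℝ, (∀ k, k ≤ n → ε k = 1 ∨ ε k = -1) ∧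
          ∀ z : ℂ, ‖z‖ = 1 →
            ‖∑ k ∈ Finset.range (n + 1), (ε k : ℂ) * z ^ k‖ ≤ C * Real.sqrt n := by
  refine ⟨20, by norm_num, fun n hn => ⟨rs, fun k _ => rs_pm k, fun z hz => ?_⟩⟩
  have h1 : ‖SP (n + 1) z‖ ≤ 10 * Real.sqrt (n + 1) := by
    have := SP_le (n + 1) z hz
    push_cast at this
    exact this
  have h2 : Real.sqrt ((n:ℝ) + 1) ≤ 2 * Real.sqrt n := by
    have hle : ((n:ℝ) + 1) ≤ 4 * n := by
      have : (2:ℝ) ≤ n := by exact_mod_cast hn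
      linarith
    calc Real.sqrt ((n:ℝ) + 1) ≤ Real.sqrt (4 * n) := Real.sqrt_le_sqrt hle
      _ = 2 * Real.sqrt n := by
          rw [Real.sqrt_mul (by norm_num : (0:ℝ) ≤ 4), show Real.sqrt 4 = 2 by
            rw [show (4:ℝ) = 2 ^ 2 by norm_num, Real.sqrt_sq (by norm_num : (0:ℝ) ≤ 2)]]
  have : ‖SP (n + 1) z‖ ≤ 20 * Real.sqrt n := by linarith
  exact this
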